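/- Let Λ be a path-connected topological space, λ₀ ∈ Λ, and σ : Λ → ℝ a continuous function that crosses 0 at λ₀ (i.e. σ(λ₀) = 0 and every neighbourhood of λ₀ contains points λ₁, λ₂ with σ(λ₁) > 0 and σ(λ₂) < 0). Let c : Λ × ℝ → ℝ be continuous. Then there exists a neighbourhood V of 0 in ℝ such that for every y ∈ V there exists λ ∈ Λ with y·σ(λ) + y²·c(λ, y) = 0 and, when y ≠ 0, σ(λ) + y·c(λ, y) = 0. -/
import Mathlib


open Topology

/-- If `σ` crosses 0 at `λ₀` on a path-connected space `Λ` and `c` is continuous,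
then for every `y` in some neighbourhood of `0` there is `λ ∈ Λ` with
`y·σ(λ) + y²·c(λ, y) = 0`, and moreover `σ(λ) + y·c(λ, y) = 0` when `y ≠ 0`. -/
theorem crossing_eigenvalue_solutions
    {Λ : Type*} [TopologicalSpace Λ] [PathConnectedSpace Λ]
    (lam₀ : Λ) (σ : Λ → ℝ) (hσ : Continuous σ)
    (hzero : σ lam₀ = 0)
    (hcross : ∀ U ∈ 𝓝 lam₀, (∃ l₁ ∈ U, 0 < σ l₁) ∧ (∃ l₂ ∈ U, σ l₂ < 0))
    (c : Λ × ℝ → ℝ) (hc : Continuous c) :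
    ∃ V ∈ 𝓝 (0 : ℝ), ∀ y ∈ V,
      ∃ l : Λ, y * σ l + y ^ 2 * c (l, y) = 0 ∧
        (y ≠ 0 → σ l + y * c (l, y) = 0) := by
  obtain ⟨⟨lp, -, hp⟩, ⟨lm, -, hm⟩⟩ := hcross Set.univ Filter.univ_mem
  have hfm : Continuous fun y : ℝ => σ lm + y * c (lm, y) := by
    exact continuous_const.add (continuous_id.mul (hc.comp (Continuous.prodMk_right lm)))
  have hfp : Continuous fun y : ℝ => σ lp + y * c (lp, y) := by
    exact continuous_const.add (continuous_id.mul (hc.comp (Continuous.prodMk_right lp)))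
  have h1 : ∀ᶠ y in 𝓝 (0 : ℝ), σ lm + y * c (lm, y) < 0 := by
    have h0 : σ lm + 0 * c (lm, 0) < 0 := by simpa using hm
    exact (hfm.continuousAt (x := 0)).eventually_lt_const h0
  have h2 : ∀ᶠ y in 𝓝 (0 : ℝ), 0 < σ lp + y * c (lp, y) := by
    have h0 : 0 < σ lp + 0 * c (lp, 0) := by simpa using hp
    exact (hfp.continuousAt (x := 0)).eventually_const_lt h0
  refine ⟨_, h1.and h2, fun y hy => ?_⟩
  rcases eq_or_ne y 0 with rfl | hy0
  · exact ⟨lam₀, by ring, fun h => absurd rfl h⟩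
  let γ : Path lm lp := PathConnectedSpace.somePath lm lp
  have hg : ContinuousOn (fun t : ℝ => σ (γ.extend t) + y * c (γ.extend t, y))
      (Set.Icc 0 1) := by
    have hγ : Continuous γ.extend := γ.continuous_extend
    exact ((hσ.comp hγ).add (continuous_const.mul
      (hc.comp (hγ.prodMk continuous_const)))).continuousOn
  have h0mem : (0 : ℝ) ∈ Set.Icc (σ (γ.extend 0) + y * c (γ.extend 0, y))
      (σ (γ.extend 1) + y * c (γ.extend 1, y)) := by
    rw [Path.extend_zero, Path.extend_one]
    exact ⟨le_of_lt hy.1, le_of_lt hy.2⟩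
  obtain ⟨t, -, hteq⟩ := intermediate_value_Icc zero_le_one hg h0mem
  refine ⟨γ.extend t, ?_, fun _ => hteq⟩
  have : y * σ (γ.extend t) + y ^ 2 * c (γ.extend t, y)
      = y * (σ (γ.extend t) + y * c (γ.extend t, y)) := by ring
  rw [this]; exact mul_eq_zero_of_right y hteq
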